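/- Fix α, β > 0 and for λ > 0 set ξ₁(λ) = (ψ₁(λ) − ψ₁(α+λ)) / (ψ₁(λ) − ψ₁(α+β+λ)). Then, as λ → ∞, ξ₁(λ) = (α/(α+β)) · [ 1 + β/λ + β(1−2α)/(2λ²) + αβ(α−1)/λ³ − β(12α³−18α²+α−β+3)/(12λ⁴) ] + O(λ⁻⁵); that is, the difference between ξ₁(λ) and the displayed expansion is O(λ⁻⁵) as λ → ∞. -/

import Mathlib

open Filter Asymptotics

/-- The polygamma function `ψₙ`: the `(n+1)`-st derivative of `log ∘ Γ`. -/
noncomputable def polygamma (n : ℕ) (x : ℝ) : ℝ :=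
  iteratedDeriv (n + 1) (fun y => Real.log (Real.Gamma y)) x

open Set Topology

namespace XiAux

/-- log Gamma -/
noncomputable def lG : ℝ → ℝ := fun y => Real.log (Real.Gamma y)

lemma analyticAt_rGamma {x : ℝ} (hx : 0 < x) : AnalyticAt ℝ Real.Gamma x := by
  have h1 : AnalyticOnNhd ℂ Complex.Gamma {z : ℂ | 0 < z.re} := by
    apply DifferentiableOn.analyticOnNhd
    · intro z hz
      refine (Complex.differentiableAt_Gamma z fun m h => ?_).differentiableWithinAt
      have : z.re = (-(m:ℂ)).re := by rw [h]
      simp only [Complex.neg_re, Complex.natCast_re] at this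
      have hm : (0:ℝ) ≤ (m:ℝ) := Nat.cast_nonneg m
      have := hz
      simp only [Set.mem_setOf_eq] at this ⊢
      linarith [hz.out]
    · exact isOpen_lt continuous_const Complex.continuous_re
  have h2 : AnalyticAt ℂ Complex.Gamma (x : ℂ) := h1 _ (by simpa using hx)
  have h3 : AnalyticAt ℝ (fun y : ℝ => (Complex.Gamma (y : ℂ)).re) x := by
    apply (Complex.reCLM.analyticAt _).comp
    exact (h2.restrictScalars).comp (Complex.ofRealCLM.analyticAt _)
  have h4 : Real.Gamma = fun y : ℝ => (Complex.Gamma (y : ℂ)).re := by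
    ext y; rw [Complex.Gamma_ofReal]; rfl
  rw [h4]; exact h3

lemma contDiffOn_lG : ContDiffOn ℝ ⊤ lG (Ioi 0) := by
  intro x hx
  have hx' : (0:ℝ) < x := hx
  have h := (analyticAt_rGamma hx').contDiffAt (n := ⊤)
  have hlog : ContDiffAt ℝ ⊤ Real.log (Real.Gamma x) :=
    Real.contDiffAt_log.mpr (Real.Gamma_pos_of_pos hx').ne'
  exact (hlog.comp x h).contDiffWithinAt

end XiAux

namespace XiAux

/-- digamma -/
noncomputable def dg : ℝ → ℝ := deriv lG
/-- trigamma -/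
noncomputable def tg : ℝ → ℝ := deriv dg

lemma contDiffOn_dg : ContDiffOn ℝ ⊤ dg (Ioi 0) :=
  contDiffOn_lG.deriv_of_isOpen isOpen_Ioi le_top

lemma contDiffOn_tg : ContDiffOn ℝ ⊤ tg (Ioi 0) :=
  contDiffOn_dg.deriv_of_isOpen isOpen_Ioi le_top

lemma contDiffAt_of_on {f : ℝ → ℝ} (h : ContDiffOn ℝ ⊤ f (Ioi 0)) {x : ℝ} (hx : 0 < x) :
    ContDiffAt ℝ ⊤ f x :=
  h.contDiffAt (isOpen_Ioi.mem_nhds hx)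

lemma diff_dg {x : ℝ} (hx : 0 < x) : DifferentiableAt ℝ dg x :=
  (contDiffAt_of_on contDiffOn_dg hx).differentiableAt (by simp)

lemma diff_lG {x : ℝ} (hx : 0 < x) : DifferentiableAt ℝ lG x :=
  (contDiffAt_of_on contDiffOn_lG hx).differentiableAt (by simp)

lemma hasDerivAt_dg {x : ℝ} (hx : 0 < x) : HasDerivAt dg (tg x) x :=
  (diff_dg hx).hasDerivAt

lemma continuousOn_tg : ContinuousOn tg (Ioi 0) := contDiffOn_tg.continuousOn

lemma polygamma_one_eq_tg (x : ℝ) : polygamma 1 x = tg x := by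
  have : polygamma 1 x = iteratedDeriv 2 lG x := rfl
  rw [this, iteratedDeriv_succ, iteratedDeriv_one]
  rfl

/-- eventual functional equation -/
lemma lG_rec {x : ℝ} (hx : 0 < x) :
    (fun y => lG (y + 1)) =ᶠ[nhds x] (fun y => Real.log y + lG y) := by
  filter_upwards [eventually_gt_nhds hx] with y hy
  simp only [lG, Real.Gamma_add_one hy.ne',
    Real.log_mul hy.ne' (Real.Gamma_pos_of_pos hy).ne', add_comm]

lemma dg_rec {x : ℝ} (hx : 0 < x) : dg (x + 1) = dg x + x⁻¹ := by
  have h1 : deriv (fun y => lG (y + 1)) x = dg (x + 1) := by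
    rw [deriv_comp_add_const]; rfl
  rw [← h1, (lG_rec hx).deriv_eq, deriv_fun_add (Real.differentiableAt_log hx.ne') (diff_lG hx),
    Real.deriv_log]
  unfold dg
  ring

lemma dg_rec_ev {x : ℝ} (hx : 0 < x) :
    (fun y => dg (y + 1)) =ᶠ[nhds x] (fun y => dg y + y⁻¹) := by
  filter_upwards [eventually_gt_nhds hx] with y hy
  exact dg_rec hy

lemma tg_rec {x : ℝ} (hx : 0 < x) : tg (x + 1) = tg x - (x ^ 2)⁻¹ := by
  have h1 : deriv (fun y => dg (y + 1)) x = tg (x + 1) := by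
    rw [deriv_comp_add_const]; rfl
  have h2 : deriv (fun y => dg y + y⁻¹) x = tg x + -(x^2)⁻¹ := by
    rw [deriv_fun_add (diff_dg hx) (differentiableAt_inv hx.ne'), deriv_inv]
    unfold tg
    ring
  rw [← h1, (dg_rec_ev hx).deriv_eq, h2]
  ring

/-- sandwich for digamma from convexity -/
lemma dg_le_log {x : ℝ} (hx : 0 < x) : dg x ≤ Real.log x := by
  have hc := Real.convexOn_log_Gamma
  have h := hc.deriv_le_slope (mem_Ioi.mpr hx) (mem_Ioi.mpr (by linarith : (0:ℝ) < x + 1))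
    (by linarith) (diff_lG hx)
  rw [slope_def_field] at h
  have : ((Real.log ∘ Real.Gamma) (x+1) - (Real.log ∘ Real.Gamma) x) / (x + 1 - x)
      = Real.log x := by
    simp only [Function.comp_apply, Real.Gamma_add_one hx.ne',
      Real.log_mul hx.ne' (Real.Gamma_pos_of_pos hx).ne']
    ring
  rw [this] at h
  exact h

lemma log_le_dg {x : ℝ} (hx : 1 < x) : Real.log (x - 1) ≤ dg x := by
  have hc := Real.convexOn_log_Gamma
  have hx0 : (0:ℝ) < x - 1 := by linarith
  have h := hc.slope_le_deriv (mem_Ioi.mpr hx0) (mem_Ioi.mpr (by linarith : (0:ℝ) < x))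
    (by linarith) (diff_lG (by linarith))
  rw [slope_def_field] at h
  have heq : ((Real.log ∘ Real.Gamma) x - (Real.log ∘ Real.Gamma) (x-1)) / (x - (x - 1))
      = Real.log (x - 1) := by
    have : x = (x - 1) + 1 := by ring
    rw [this]
    simp only [Function.comp_apply, Real.Gamma_add_one hx0.ne',
      Real.log_mul hx0.ne' (Real.Gamma_pos_of_pos hx0).ne']
    ring_nf
  rw [heq] at h
  exact h

/-- digamma is monotone on positives -/
lemma dg_mono {x y : ℝ} (hx : 0 < x) (hxy : x < y) : dg x ≤ dg y := by
  have hc := Real.convexOn_log_Gamma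
  have hy : 0 < y := lt_trans hx hxy
  calc dg x ≤ slope lG x y := hc.deriv_le_slope (mem_Ioi.mpr hx) (mem_Ioi.mpr hy) hxy (diff_lG hx)
    _ ≤ dg y := hc.slope_le_deriv (mem_Ioi.mpr hx) (mem_Ioi.mpr hy) hxy (diff_lG hy)

/-- trigamma nonneg -/
lemma tg_nonneg {x : ℝ} (hx : 0 < x) : 0 ≤ tg x := by
  have h := hasDerivAt_dg hx
  rw [hasDerivAt_iff_tendsto_slope] at h
  have h' : Tendsto (slope dg x) (nhdsWithin x (Ioi x)) (nhds (tg x)) :=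
    h.mono_left (nhdsWithin_mono x (fun z hz => Set.mem_compl_singleton_iff.mpr
      (ne_of_gt (mem_Ioi.mp hz))))
  refine ge_of_tendsto h' ?_
  filter_upwards [self_mem_nhdsWithin] with z hz
  have hxz : x < z := mem_Ioi.mp hz
  rw [slope_def_field]
  apply div_nonneg _ (by linarith)
  have := dg_mono hx hxz
  linarith

end XiAux

namespace XiAux

lemma tg_partial {x : ℝ} (hx : 0 < x) (n : ℕ) :
    tg x = (∑ k ∈ Finset.range n, ((x + k) ^ 2)⁻¹) + tg (x + n) := by
  induction n with
  | zero => simp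
  | succ n ih =>
    have hxn : 0 < x + n := by positivity
    rw [Finset.sum_range_succ, ih]
    have key : tg (x + n + 1) = tg (x + n) - ((x + n)^2)⁻¹ := tg_rec hxn
    push_cast
    rw [show x + ((n:ℝ) + 1) = x + (n:ℝ) + 1 by ring, key]
    ring

lemma summable_shift {c : ℝ} (hc : 0 < c) : Summable (fun k : ℕ => ((c + k) ^ 2)⁻¹) := by
  have hstd : Summable (fun k : ℕ => ((k : ℝ) ^ 2)⁻¹) := by
    simpa [one_div] using Real.summable_one_div_nat_pow.mpr (by norm_num : 1 < 2)
  have hstd1 : Summable (fun k : ℕ => (((k : ℝ) + 1) ^ 2)⁻¹) := by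
    have := (summable_nat_add_iff (f := fun k : ℕ => ((k : ℝ) ^ 2)⁻¹) 1).mpr hstd
    simpa using this
  apply (summable_nat_add_iff 1).mp
  apply Summable.of_nonneg_of_le (fun k => by positivity) _ hstd1
  intro k
  have h1 : ((k:ℝ) + 1) ≤ c + (k + 1 : ℕ) := by push_cast; linarith
  have h2 : (0:ℝ) < (k:ℝ) + 1 := by positivity
  apply inv_anti₀ (by positivity)
  have : ((k:ℝ)+1)^2 ≤ (c + ((k:ℕ):ℝ) + 1)^2 := by nlinarith
  calc ((k:ℝ)+1)^2 ≤ (c + (((k+1):ℕ):ℝ))^2 := by push_cast; nlinarith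
    _ = (c + ((k+1):ℕ))^2 := by norm_num

/-- the trigamma series -/
noncomputable def S (x : ℝ) : ℝ := ∑' k : ℕ, ((x + k) ^ 2)⁻¹

noncomputable def L (x : ℝ) : ℝ := tg x - S x

lemma tendsto_tg_shift {x : ℝ} (hx : 0 < x) :
    Tendsto (fun n : ℕ => tg (x + n)) atTop (nhds (L x)) := by
  have hsum := (summable_shift hx).hasSum.tendsto_sum_nat
  have : (fun n : ℕ => tg (x + n))
      = fun n : ℕ => tg x - ∑ k ∈ Finset.range n, ((x + k) ^ 2)⁻¹ := by
    funext n
    have := tg_partial hx n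
    linarith
  rw [this]
  exact (tendsto_const_nhds.sub hsum)

lemma L_le_tg_shift {x : ℝ} (hx : 0 < x) (n : ℕ) : L x ≤ tg (x + n) := by
  have h1 : ∑ k ∈ Finset.range n, ((x + k) ^ 2)⁻¹ ≤ S x :=
    (summable_shift hx).sum_le_tsum _ (fun k _ => by positivity)
  have h2 := tg_partial hx n
  simp only [L]
  linarith

lemma L_nonneg {x : ℝ} (hx : 0 < x) : 0 ≤ L x := by
  refine ge_of_tendsto (tendsto_tg_shift hx) ?_
  filter_upwards with n
  exact tg_nonneg (by positivity)

lemma continuousAt_S {x : ℝ} (hx : 0 < x) : ContinuousAt S x := by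
  have hx2 : 0 < x / 2 := by linarith
  have hcont : ContinuousOn S (Ici (x/2)) := by
    apply continuousOn_tsum (u := fun k : ℕ => ((x/2 + k) ^ 2)⁻¹)
    · intro k
      apply ContinuousOn.inv₀ (by fun_prop)
      intro y hy
      have hy0 : 0 < y := lt_of_lt_of_le hx2 hy
      positivity
    · exact summable_shift hx2
    · intro k y hy
      have h1 : x/2 ≤ y := hy
      have h2 : (0:ℝ) < x/2 + k := by positivity
      rw [Real.norm_eq_abs, abs_of_nonneg (by positivity)]
      apply inv_anti₀ (by positivity)
      nlinarith
  exact hcont.continuousAt (Ici_mem_nhds (by linarith))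

lemma continuousAt_L {x : ℝ} (hx : 0 < x) : ContinuousAt L x := by
  apply ContinuousAt.sub _ (continuousAt_S hx)
  exact (continuousOn_tg.continuousAt (isOpen_Ioi.mem_nhds hx))

lemma mvt_bound {a δ : ℝ} (ha : 1 < a) (hδ : 0 < δ) :
    ∃ c ∈ Ioo a (a + δ), tg c ≤ (δ + 1) / (δ * (a - 1)) := by
  obtain ⟨c, hc, hceq⟩ := exists_hasDerivAt_eq_slope dg tg (by linarith : a < a + δ)
    (contDiffOn_dg.continuousOn.mono (fun z hz => by
      have := hz.1; simp only [mem_Ioi]; linarith))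
    (fun z hz => hasDerivAt_dg (by have := hz.1; linarith))
  refine ⟨c, hc, ?_⟩
  rw [hceq]
  have ha1 : (0:ℝ) < a - 1 := by linarith
  have h1 : dg (a + δ) ≤ Real.log (a + δ) := dg_le_log (by linarith)
  have h2 : Real.log (a - 1) ≤ dg a := log_le_dg ha
  have h3 : Real.log (a + δ) - Real.log (a - 1) ≤ (a + δ - (a - 1)) / (a - 1) := by
    rw [← Real.log_div (by positivity) (by positivity)]
    have := Real.log_le_sub_one_of_pos (show (0:ℝ) < (a + δ)/(a-1) by positivity)
    calc Real.log ((a + δ)/(a-1)) ≤ (a + δ)/(a-1) - 1 := this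
      _ = (a + δ - (a - 1))/(a - 1) := by field_simp
  have h4 : dg (a + δ) - dg a ≤ (δ + 1) / (a - 1) := by
    have : a + δ - (a - 1) = δ + 1 := by ring
    rw [this] at h3
    linarith
  rw [show a + δ - a = δ by ring, div_le_div_iff₀ hδ (by positivity)]
  have h5 : (dg (a + δ) - dg a) * (a - 1) ≤ δ + 1 := (le_div_iff₀ ha1).mp h4
  nlinarith [mul_le_mul_of_nonneg_right h5 hδ.le]

lemma L_eq_zero {x : ℝ} (hx : 0 < x) : L x = 0 := by
  refine le_antisymm ?_ (L_nonneg hx)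
  by_contra hcon
  push_neg at hcon
  set ε := L x with hε
  have hεpos : 0 < ε := hcon
  -- continuity gives δ
  have hc := continuousAt_L hx
  rw [Metric.continuousAt_iff] at hc
  obtain ⟨δ, hδpos, hδ⟩ := hc (ε/2) (by linarith)
  set δ' := min δ 1 with hδ'
  have hδ'pos : 0 < δ' := lt_min hδpos one_pos
  have hδ'le : δ' ≤ 1 := min_le_right _ _
  -- choose n large
  obtain ⟨n, hn⟩ := exists_nat_gt (2 - x + (δ' + 1) / (δ' * (ε/4)))
  have hq : (0:ℝ) < (δ' + 1) / (δ' * (ε/4)) := by positivity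
  have hxn1 : 1 < x + n := by linarith
  -- MVT point
  obtain ⟨c, hc1, hc2⟩ := mvt_bound hxn1 hδ'pos
  have hcx : 0 < c - n := by
    have := hc1.1
    linarith
  -- tg c small
  have hpos2 : 0 < δ' * ((x + n) - 1) := by nlinarith
  have hbound : (δ' + 1) / (δ' * ((x + n) - 1)) ≤ ε/4 := by
    rw [div_le_iff₀ hpos2]
    have h5 : (δ' + 1) / (δ' * (ε/4)) ≤ (x + n) - 1 := by linarith
    rw [div_le_iff₀ (by positivity)] at h5
    nlinarith
  have htgc : tg c ≤ ε/4 := le_trans hc2 hbound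
  -- L (c - n) ≤ tg c
  have hLc : L (c - n) ≤ tg c := by
    have := L_le_tg_shift hcx n
    rwa [sub_add_cancel] at this
  -- continuity: |L (c-n) - L x| < ε/2 since |(c-n) - x| < δ
  have hdist : dist (c - n) x < δ := by
    rw [Real.dist_eq, abs_lt]
    constructor
    · have := hc1.1; linarith
    · have h6 := hc1.2
      have : c - n < x + δ' := by linarith
      have : δ' ≤ δ := min_le_left _ _
      linarith
  have := hδ hdist
  rw [Real.dist_eq, abs_lt] at this
  -- L x < ε/2 + L(c-n) ≤ ε/2 + ε/4 < ε : contradiction with L x = ε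
  have : ε < ε := by
    calc ε = L x := rfl
      _ < L (c - n) + ε/2 := by linarith
      _ ≤ tg c + ε/2 := by linarith
      _ ≤ ε/4 + ε/2 := by linarith
      _ < ε := by linarith
  exact absurd this (lt_irrefl ε)

lemma tendsto_tg_zero {x : ℝ} (hx : 0 < x) :
    Tendsto (fun n : ℕ => tg (x + n)) atTop (nhds 0) := by
  have := tendsto_tg_shift hx
  rwa [show L x = 0 from L_eq_zero hx] at this

end XiAux

namespace XiAux

/-- truncated asymptotic expansion of trigamma -/
noncomputable def Tf (x : ℝ) : ℝ := x⁻¹ + (2*x^2)⁻¹ + (6*x^3)⁻¹ - (30*x^5)⁻¹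

/-- error term -/
noncomputable def Ef (x : ℝ) : ℝ := tg x - Tf x

/-- one-step defect -/
noncomputable def rf (x : ℝ) : ℝ := (x^2)⁻¹ - (Tf x - Tf (x+1))

lemma rf_eq {x : ℝ} (hx : 0 < x) :
    rf x = (1 + 5*x + 5*x^2) / (30 * x^5 * (x+1)^5) := by
  have h1 : x + 1 ≠ 0 := by positivity
  have h2 : x ≠ 0 := hx.ne'
  simp only [rf, Tf]
  field_simp
  ring

lemma rf_nonneg {x : ℝ} (hx : 0 < x) : 0 ≤ rf x := by
  rw [rf_eq hx]; positivity

lemma rf_le {x : ℝ} (hx : 1 ≤ x) : rf x ≤ (x^8)⁻¹ := by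
  have hx0 : 0 < x := by linarith
  rw [rf_eq hx0, div_le_iff₀ (by positivity)]
  rw [show (x^8)⁻¹ * (30 * x^5 * (x+1)^5) = 30 * ((x+1)^5 / x^3) by field_simp,
    show 30 * ((x+1)^5 / x^3) = 30 * (x+1)^5 / x^3 by ring, le_div_iff₀ (by positivity)]
  nlinarith [pow_le_pow_left₀ (by linarith : (0:ℝ) ≤ x) (by linarith : x ≤ x + 1) 5,
    pow_pos hx0 5, pow_pos hx0 3, pow_le_pow_right₀ hx (by norm_num : 2 ≤ 8),
    one_le_pow₀ hx (n:=2), one_le_pow₀ hx (n:=3)]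

lemma Ef_telescope {x : ℝ} (hx : 0 < x) (n : ℕ) :
    Ef x = (∑ k ∈ Finset.range n, rf (x + k)) + Ef (x + n) := by
  induction n with
  | zero => simp
  | succ n ih =>
    have hxn : 0 < x + n := by positivity
    rw [Finset.sum_range_succ, ih]
    have key : Ef (x + n) = rf (x + n) + Ef (x + n + 1) := by
      simp only [Ef, rf]
      have := tg_rec hxn
      rw [this]
      ring
    push_cast
    rw [show x + ((n:ℝ) + 1) = x + (n:ℝ) + 1 by ring]
    rw [key]
    ring

lemma tendsto_Tf_shift (x : ℝ) : Tendsto (fun n : ℕ => Tf (x + n)) atTop (nhds 0) := by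
  have hcomp : Tendsto (fun n : ℕ => x + (n:ℝ)) atTop atTop :=
    tendsto_atTop_add_const_left _ _ tendsto_natCast_atTop_atTop
  have hTf : Tendsto Tf atTop (nhds 0) := by
    have h1 : Tendsto (fun y : ℝ => y⁻¹) atTop (nhds 0) := tendsto_inv_atTop_zero
    have h2 : Tendsto (fun y : ℝ => (2*y^2)⁻¹) atTop (nhds 0) := by
      apply Tendsto.inv_tendsto_atTop
      apply Tendsto.const_mul_atTop (by norm_num : (0:ℝ) < 2) (tendsto_pow_atTop (by norm_num))
    have h3 : Tendsto (fun y : ℝ => (6*y^3)⁻¹) atTop (nhds 0) := by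
      apply Tendsto.inv_tendsto_atTop
      apply Tendsto.const_mul_atTop (by norm_num : (0:ℝ) < 6) (tendsto_pow_atTop (by norm_num))
    have h5 : Tendsto (fun y : ℝ => (30*y^5)⁻¹) atTop (nhds 0) := by
      apply Tendsto.inv_tendsto_atTop
      apply Tendsto.const_mul_atTop (by norm_num : (0:ℝ) < 30) (tendsto_pow_atTop (by norm_num))
    have h6 := ((h1.add h2).add h3).sub h5
    simp only [add_zero, sub_zero] at h6
    exact h6
  exact hTf.comp hcomp

lemma tendsto_Ef_shift {x : ℝ} (hx : 0 < x) :
    Tendsto (fun n : ℕ => Ef (x + n)) atTop (nhds 0) := by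
  have := (tendsto_tg_zero hx).sub (tendsto_Tf_shift x)
  simpa [Ef] using this

lemma Ef_bound {x : ℝ} (hx : 2 ≤ x) : |Ef x| ≤ 2 * (x^7)⁻¹ := by
  have hx0 : 0 < x := by linarith
  have hx1 : 1 < x := by linarith
  -- partial sums tend to Ef x
  have hpartial : Tendsto (fun n => ∑ k ∈ Finset.range n, rf (x + k)) atTop (nhds (Ef x)) := by
    have h1 : (fun n : ℕ => ∑ k ∈ Finset.range n, rf (x + k))
        = fun n : ℕ => Ef x - Ef (x + n) := by
      funext n
      have := Ef_telescope hx0 n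
      linarith
    rw [h1]
    simpa using tendsto_const_nhds.sub (tendsto_Ef_shift hx0)
  refine le_of_tendsto hpartial.abs ?_
  filter_upwards with n
  have hterm : ∀ k : ℕ, rf (x + k) ≤ x⁻¹^6 * ((x - 1 + k)⁻¹ - (x + k)⁻¹) := by
    intro k
    have hk0 : (0:ℝ) ≤ k := Nat.cast_nonneg k
    have hxk : 0 < x - 1 + k := by linarith
    have hxk2 : 0 < x + k := by linarith
    have hdiff : (x - 1 + k)⁻¹ - (x + k)⁻¹ = ((x - 1 + k) * (x + k))⁻¹ := by
      rw [mul_inv]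
      field_simp
      ring
    rw [hdiff]
    refine le_trans (rf_le (by linarith)) ?_
    rw [inv_pow, ← mul_inv]
    apply inv_anti₀ (by positivity)
    calc x ^ 6 * ((x - 1 + k) * (x + k)) ≤ (x + k)^2 * x^6 := by nlinarith [pow_pos hx0 6]
      _ ≤ (x + k)^2 * (x + k)^6 := by
          have : x ^ 6 ≤ (x + k)^6 := pow_le_pow_left₀ hx0.le (by linarith) 6
          nlinarith [sq_nonneg (x+k)]
      _ = (x + k)^8 := by ring
  have htel : ∑ k ∈ Finset.range n, ((x - 1 + k)⁻¹ - (x + k)⁻¹)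
      = (x - 1)⁻¹ - (x - 1 + n)⁻¹ := by
    have h := Finset.sum_range_sub' (f := fun k : ℕ => (x - 1 + k)⁻¹) n
    simp only [Nat.cast_zero, add_zero] at h
    rw [← h]
    apply Finset.sum_congr rfl
    intro k _
    have : x - 1 + ((k:ℝ) + 1) = x + k := by ring
    push_cast
    rw [this]
  have hsum : ∑ k ∈ Finset.range n, rf (x + k) ≤ x⁻¹^6 * ((x-1)⁻¹ - (x - 1 + n)⁻¹) := by
    calc ∑ k ∈ Finset.range n, rf (x + k)
        ≤ ∑ k ∈ Finset.range n, x⁻¹^6 * ((x - 1 + k)⁻¹ - (x + k)⁻¹) :=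
          Finset.sum_le_sum (fun k _ => hterm k)
      _ = x⁻¹^6 * ((x-1)⁻¹ - (x - 1 + n)⁻¹) := by rw [← Finset.mul_sum, htel]
  have habs : |∑ k ∈ Finset.range n, rf (x + k)| = ∑ k ∈ Finset.range n, rf (x + k) := by
    apply abs_of_nonneg
    apply Finset.sum_nonneg
    intro k _
    exact rf_nonneg (by positivity)
  rw [habs]
  have hn : (0:ℝ) < x - 1 + n := by
    have : (0:ℝ) ≤ n := Nat.cast_nonneg n
    linarith
  have h2 : (x-1)⁻¹ ≤ 2 * x⁻¹ := by
    rw [inv_le_iff_one_le_mul₀ (by linarith)]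
    have : x⁻¹ * x = 1 := inv_mul_cancel₀ hx0.ne'
    nlinarith [inv_pos.mpr hx0]
  calc ∑ k ∈ Finset.range n, rf (x + k) ≤ x⁻¹^6 * ((x-1)⁻¹ - (x - 1 + n)⁻¹) := hsum
    _ ≤ x⁻¹^6 * (x-1)⁻¹ := by
        have : (0:ℝ) < (x - 1 + n)⁻¹ := inv_pos.mpr hn
        nlinarith [pow_pos (inv_pos.mpr hx0) 6]
    _ ≤ x⁻¹^6 * (2 * x⁻¹) := by
        nlinarith [pow_pos (inv_pos.mpr hx0) 6]
    _ = 2 * (x^7)⁻¹ := by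
        rw [← inv_pow]
        ring

lemma tg_expansion {x : ℝ} (hx : 2 ≤ x) : |tg x - Tf x| ≤ 2 * (x^7)⁻¹ := Ef_bound hx

end XiAux



namespace XiAux

/-- truncated expansion of `Tf l - Tf (u+l)` in powers of `1/l` -/
noncomputable def Atr (u l : ℝ) : ℝ :=
  u/l^2 + (u - u^2)/l^3 + (u^3 - 3/2*u^2 + 1/2*u)/l^4 + (2*u^3 - u^4 - u^2)/l^5
    + (u^5 - 5/2*u^4 + 5/3*u^3 - 1/6*u)/l^6

/-- bound constant for the remainder -/
noncomputable def CA (u : ℝ) : ℝ :=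
  ((5*u^6+50*u^8+75*u^9+30*u^10) + (24*u^5+220*u^7+315*u^8+120*u^9)
    + (45*u^4+365*u^6+495*u^7+180*u^8) + (40*u^3+270*u^5+345*u^6+120*u^7)
    + (15*u^2+75*u^4+90*u^5+30*u^6))/30

lemma rho_identity {u l : ℝ} (hu : 0 < u) (hl : 0 < l) :
    Tf l - Tf (u + l) - Atr u l =
      ((5*u^6-50*u^8+75*u^9-30*u^10) + (24*u^5-220*u^7+315*u^8-120*u^9)*l
        + (45*u^4-365*u^6+495*u^7-180*u^8)*l^2 + (40*u^3-270*u^5+345*u^6-120*u^7)*l^3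
        + (15*u^2-75*u^4+90*u^5-30*u^6)*l^4) / (30*l^6*(u+l)^5) := by
  have h1 : l ≠ 0 := hl.ne'
  have h2 : u + l ≠ 0 := by positivity
  simp only [Tf, Atr]
  field_simp
  ring

lemma rho_bound {u l : ℝ} (hu : 0 < u) (hl : 1 ≤ l) :
    |Tf l - Tf (u + l) - Atr u l| ≤ CA u / l^7 := by
  have hl0 : 0 < l := by linarith
  rw [rho_identity hu hl0, abs_div, abs_of_pos (by positivity : (0:ℝ) < 30*l^6*(u+l)^5)]
  have hnum : |(5*u^6-50*u^8+75*u^9-30*u^10) + (24*u^5-220*u^7+315*u^8-120*u^9)*l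
        + (45*u^4-365*u^6+495*u^7-180*u^8)*l^2 + (40*u^3-270*u^5+345*u^6-120*u^7)*l^3
        + (15*u^2-75*u^4+90*u^5-30*u^6)*l^4| ≤ (30 * CA u) * l^4 := by
    have e4 : |l^4| = l^4 := abs_of_pos (by positivity)
    have e1 : |l| = l := abs_of_pos hl0
    have b0 : |5*u^6-50*u^8+75*u^9-30*u^10| ≤ 5*u^6+50*u^8+75*u^9+30*u^10 := by
      rw [abs_le]; constructor <;> nlinarith [pow_pos hu 6, pow_pos hu 8, pow_pos hu 9,
        pow_pos hu 10]
    have b1 : |24*u^5-220*u^7+315*u^8-120*u^9| ≤ 24*u^5+220*u^7+315*u^8+120*u^9 := by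
      rw [abs_le]; constructor <;> nlinarith [pow_pos hu 5, pow_pos hu 7, pow_pos hu 8,
        pow_pos hu 9]
    have b2 : |45*u^4-365*u^6+495*u^7-180*u^8| ≤ 45*u^4+365*u^6+495*u^7+180*u^8 := by
      rw [abs_le]; constructor <;> nlinarith [pow_pos hu 4, pow_pos hu 6, pow_pos hu 7,
        pow_pos hu 8]
    have b3 : |40*u^3-270*u^5+345*u^6-120*u^7| ≤ 40*u^3+270*u^5+345*u^6+120*u^7 := by
      rw [abs_le]; constructor <;> nlinarith [pow_pos hu 3, pow_pos hu 5, pow_pos hu 6,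
        pow_pos hu 7]
    have b4 : |15*u^2-75*u^4+90*u^5-30*u^6| ≤ 15*u^2+75*u^4+90*u^5+30*u^6 := by
      rw [abs_le]; constructor <;> nlinarith [pow_pos hu 2, pow_pos hu 4, pow_pos hu 5,
        pow_pos hu 6]
    have hle1 : l ≤ l^4 := by
      calc l = l^1 := (pow_one l).symm
        _ ≤ l^4 := pow_le_pow_right₀ hl (by norm_num)
    have hle2 : l^2 ≤ l^4 := pow_le_pow_right₀ hl (by norm_num)
    have hle3 : l^3 ≤ l^4 := pow_le_pow_right₀ hl (by norm_num)
    have h14 : (1:ℝ) ≤ l^4 := one_le_pow₀ hl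
    have t0 : |(5*u^6-50*u^8+75*u^9-30*u^10)| ≤ (5*u^6+50*u^8+75*u^9+30*u^10)*l^4 :=
      b0.trans (le_mul_of_one_le_right (by positivity) h14)
    have t1 : |(24*u^5-220*u^7+315*u^8-120*u^9)*l| ≤ (24*u^5+220*u^7+315*u^8+120*u^9)*l^4 := by
      rw [abs_mul, e1]
      calc |24*u^5-220*u^7+315*u^8-120*u^9| * l ≤ (24*u^5+220*u^7+315*u^8+120*u^9) * l :=
            mul_le_mul_of_nonneg_right b1 hl0.le
        _ ≤ (24*u^5+220*u^7+315*u^8+120*u^9)*l^4 :=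
            mul_le_mul_of_nonneg_left hle1 (by positivity)
    have t2 : |(45*u^4-365*u^6+495*u^7-180*u^8)*l^2| ≤ (45*u^4+365*u^6+495*u^7+180*u^8)*l^4 := by
      rw [abs_mul, abs_of_pos (by positivity : (0:ℝ) < l^2)]
      calc |45*u^4-365*u^6+495*u^7-180*u^8| * l^2 ≤ (45*u^4+365*u^6+495*u^7+180*u^8) * l^2 :=
            mul_le_mul_of_nonneg_right b2 (by positivity)
        _ ≤ (45*u^4+365*u^6+495*u^7+180*u^8)*l^4 :=
            mul_le_mul_of_nonneg_left hle2 (by positivity)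
    have t3 : |(40*u^3-270*u^5+345*u^6-120*u^7)*l^3| ≤ (40*u^3+270*u^5+345*u^6+120*u^7)*l^4 := by
      rw [abs_mul, abs_of_pos (by positivity : (0:ℝ) < l^3)]
      calc |40*u^3-270*u^5+345*u^6-120*u^7| * l^3 ≤ (40*u^3+270*u^5+345*u^6+120*u^7) * l^3 :=
            mul_le_mul_of_nonneg_right b3 (by positivity)
        _ ≤ (40*u^3+270*u^5+345*u^6+120*u^7)*l^4 :=
            mul_le_mul_of_nonneg_left hle3 (by positivity)
    have t4 : |(15*u^2-75*u^4+90*u^5-30*u^6)*l^4| ≤ (15*u^2+75*u^4+90*u^5+30*u^6)*l^4 := by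
      rw [abs_mul, e4]
      exact mul_le_mul_of_nonneg_right b4 (by positivity)
    calc |(5*u^6-50*u^8+75*u^9-30*u^10) + (24*u^5-220*u^7+315*u^8-120*u^9)*l
        + (45*u^4-365*u^6+495*u^7-180*u^8)*l^2 + (40*u^3-270*u^5+345*u^6-120*u^7)*l^3
        + (15*u^2-75*u^4+90*u^5-30*u^6)*l^4|
        ≤ |(5*u^6-50*u^8+75*u^9-30*u^10)| + |(24*u^5-220*u^7+315*u^8-120*u^9)*l|
          + |(45*u^4-365*u^6+495*u^7-180*u^8)*l^2| + |(40*u^3-270*u^5+345*u^6-120*u^7)*l^3|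
          + |(15*u^2-75*u^4+90*u^5-30*u^6)*l^4| := by
          exact le_trans (abs_add_le _ _) (add_le_add (le_trans (abs_add_le _ _)
            (add_le_add (le_trans (abs_add_le _ _) (add_le_add (le_trans (abs_add_le _ _)
              (add_le_add le_rfl le_rfl)) le_rfl)) le_rfl)) le_rfl)
      _ ≤ (5*u^6+50*u^8+75*u^9+30*u^10)*l^4 + (24*u^5+220*u^7+315*u^8+120*u^9)*l^4
          + (45*u^4+365*u^6+495*u^7+180*u^8)*l^4 + (40*u^3+270*u^5+345*u^6+120*u^7)*l^4
          + (15*u^2+75*u^4+90*u^5+30*u^6)*l^4 := by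
          exact add_le_add (add_le_add (add_le_add (add_le_add t0 t1) t2) t3) t4
      _ = (30 * CA u) * l^4 := by simp only [CA]; ring
  have hden : 30*l^11 ≤ 30*l^6*(u+l)^5 := by
    have : l^5 ≤ (u+l)^5 := pow_le_pow_left₀ (by positivity) (by linarith) 5
    nlinarith [pow_pos hl0 6]
  have hCA : 0 ≤ 30 * CA u := by
    simp only [CA]
    have := hu.le
    positivity
  calc _ ≤ ((30 * CA u) * l^4) / (30*l^11) :=
        div_le_div₀ (by positivity) hnum (by positivity) hden
    _ = CA u / l^7 := by
        field_simp

end XiAux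

namespace XiAux

/-- main term of the expansion, exactly as in the theorem statement -/
noncomputable def Mfun (α β l : ℝ) : ℝ :=
  α / (α + β) *
    (1 + β / l + β * (1 - 2 * α) / (2 * l ^ 2) + α * β * (α - 1) / l ^ 3
      - β * (12 * α ^ 3 - 18 * α ^ 2 + α - β + 3) / (12 * l ^ 4))

noncomputable def A3f (u : ℝ) : ℝ := u - u^2
noncomputable def A4f (u : ℝ) : ℝ := u^3 - 3/2*u^2 + 1/2*u
noncomputable def A5f (u : ℝ) : ℝ := 2*u^3 - u^4 - u^2
noncomputable def A6f (u : ℝ) : ℝ := u^5 - 5/2*u^4 + 5/3*u^3 - 1/6*u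

noncomputable def mm2 (α β : ℝ) : ℝ := β*(1-2*α)/2
noncomputable def mm3 (α β : ℝ) : ℝ := α*β*(α-1)
noncomputable def mm4 (α β : ℝ) : ℝ := -(β*(12*α^3-18*α^2+α-β+3))/12

noncomputable def t7f (α β : ℝ) : ℝ :=
  β * A6f (α+β) + mm2 α β * A5f (α+β) + mm3 α β * A4f (α+β) + mm4 α β * A3f (α+β)
noncomputable def t8f (α β : ℝ) : ℝ :=
  mm2 α β * A6f (α+β) + mm3 α β * A5f (α+β) + mm4 α β * A4f (α+β)
noncomputable def t9f (α β : ℝ) : ℝ := mm3 α β * A6f (α+β) + mm4 α β * A5f (α+β)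
noncomputable def t10f (α β : ℝ) : ℝ := mm4 α β * A6f (α+β)

set_option maxHeartbeats 2000000 in
lemma cancel_identity (α β l : ℝ) (hl : l ≠ 0) (hs : α + β ≠ 0) :
    Atr α l - Mfun α β l * Atr (α+β) l
      = -(α/(α+β)) * (t7f α β/l^7 + t8f α β/l^8 + t9f α β/l^9 + t10f α β/l^10) := by
  simp only [Atr, Mfun, t7f, t8f, t9f, t10f, A3f, A4f, A5f, A6f, mm2, mm3, mm4]
  field_simp
  ring

end XiAux

namespace XiAux

noncomputable def CMf (α β : ℝ) : ℝ :=
  |α/(α+β)| * (1 + β + |β*(1-2*α)|/2 + |α*β*(α-1)| + |β*(12*α^3-18*α^2+α-β+3)|/12)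

lemma M_bound {α β l : ℝ} (hβ : 0 < β) (hl : 1 ≤ l) : |Mfun α β l| ≤ CMf α β := by
  have hl0 : 0 < l := by linarith
  rw [Mfun, CMf, abs_mul]
  apply mul_le_mul_of_nonneg_left _ (abs_nonneg _)
  have h2 : l^2 ≥ 1 := one_le_pow₀ hl
  have h3 : l^3 ≥ 1 := one_le_pow₀ hl
  have h4 : l^4 ≥ 1 := one_le_pow₀ hl
  have e1 : |β / l| ≤ β := by
    rw [abs_div, abs_of_pos hβ, abs_of_pos hl0]
    exact div_le_self hβ.le hl
  have e2 : |β * (1 - 2*α) / (2 * l^2)| ≤ |β*(1-2*α)|/2 := by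
    rw [abs_div, abs_of_pos (by positivity : (0:ℝ) < 2*l^2)]
    rw [div_le_div_iff₀ (by positivity) (by norm_num)]
    nlinarith [abs_nonneg (β*(1-2*α))]
  have e3 : |α * β * (α-1) / l^3| ≤ |α*β*(α-1)| := by
    rw [abs_div, abs_of_pos (by positivity : (0:ℝ) < l^3)]
    exact div_le_self (abs_nonneg _) h3
  have e4 : |β * (12*α^3 - 18*α^2 + α - β + 3) / (12 * l^4)| ≤ |β*(12*α^3-18*α^2+α-β+3)|/12 := by
    rw [abs_div, abs_of_pos (by positivity : (0:ℝ) < 12*l^4)]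
    rw [div_le_div_iff₀ (by positivity) (by norm_num)]
    nlinarith [abs_nonneg (β*(12*α^3-18*α^2+α-β+3))]
  calc |1 + β/l + β*(1-2*α)/(2*l^2) + α*β*(α-1)/l^3 - β*(12*α^3-18*α^2+α-β+3)/(12*l^4)|
      ≤ |1 + β/l + β*(1-2*α)/(2*l^2) + α*β*(α-1)/l^3|
        + |β*(12*α^3-18*α^2+α-β+3)/(12*l^4)| := abs_sub _ _
    _ ≤ (|1 + β/l + β*(1-2*α)/(2*l^2)| + |α*β*(α-1)/l^3|)
        + |β*(12*α^3-18*α^2+α-β+3)/(12*l^4)| := by gcongr ?_ + _; exact abs_add_le _ _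
    _ ≤ ((|1 + β/l| + |β*(1-2*α)/(2*l^2)|) + |α*β*(α-1)/l^3|)
        + |β*(12*α^3-18*α^2+α-β+3)/(12*l^4)| := by gcongr ?_ + _ + _; exact abs_add_le _ _
    _ ≤ (((|(1:ℝ)| + |β/l|) + |β*(1-2*α)/(2*l^2)|) + |α*β*(α-1)/l^3|)
        + |β*(12*α^3-18*α^2+α-β+3)/(12*l^4)| := by gcongr ?_ + _ + _ + _; exact abs_add_le _ _
    _ ≤ 1 + β + |β*(1-2*α)|/2 + |α*β*(α-1)| + |β*(12*α^3-18*α^2+α-β+3)|/12 := by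
        rw [abs_one]
        exact add_le_add (add_le_add (add_le_add (add_le_add le_rfl e1) e2) e3) e4

noncomputable def CGf (α β : ℝ) : ℝ :=
  CA α + CMf α β * CA (α+β)
    + |α/(α+β)| * (|t7f α β| + |t8f α β| + |t9f α β| + |t10f α β|)

lemma G_bound {α β l : ℝ} (hα : 0 < α) (hβ : 0 < β) (hl : 1 ≤ l) :
    |(Tf l - Tf (α+l)) - Mfun α β l * (Tf l - Tf (α+β+l))| ≤ CGf α β / l^7 := by
  have hl0 : 0 < l := by linarith
  have hs : 0 < α + β := by linarith
  have hdecomp : (Tf l - Tf (α+l)) - Mfun α β l * (Tf l - Tf (α+β+l))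
      = (Tf l - Tf (α+l) - Atr α l) - Mfun α β l * (Tf l - Tf (α+β+l) - Atr (α+β) l)
        + (Atr α l - Mfun α β l * Atr (α+β) l) := by ring
  rw [hdecomp, cancel_identity α β l hl0.ne' hs.ne']
  have h1 : |Tf l - Tf (α+l) - Atr α l| ≤ CA α / l^7 := rho_bound hα hl
  have h2 : |Tf l - Tf (α+β+l) - Atr (α+β) l| ≤ CA (α+β) / l^7 := rho_bound hs hl
  have hM := M_bound (α := α) hβ hl
  have h3 : |(-(α/(α+β))) * (t7f α β/l^7 + t8f α β/l^8 + t9f α β/l^9 + t10f α β/l^10)|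
      ≤ |α/(α+β)| * (|t7f α β| + |t8f α β| + |t9f α β| + |t10f α β|) / l^7 := by
    rw [abs_mul, abs_neg]
    rw [mul_div_assoc]
    apply mul_le_mul_of_nonneg_left _ (abs_nonneg _)
    have k8 : l^7 ≤ l^8 := pow_le_pow_right₀ hl (by norm_num)
    have k9 : l^7 ≤ l^9 := pow_le_pow_right₀ hl (by norm_num)
    have k10 : l^7 ≤ l^10 := pow_le_pow_right₀ hl (by norm_num)
    have p7 : (0:ℝ) < l^7 := by positivity
    calc |t7f α β/l^7 + t8f α β/l^8 + t9f α β/l^9 + t10f α β/l^10|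
        ≤ |t7f α β/l^7 + t8f α β/l^8 + t9f α β/l^9| + |t10f α β/l^10| := abs_add_le _ _
      _ ≤ (|t7f α β/l^7 + t8f α β/l^8| + |t9f α β/l^9|) + |t10f α β/l^10| := by
          gcongr ?_ + _; exact abs_add_le _ _
      _ ≤ ((|t7f α β/l^7| + |t8f α β/l^8|) + |t9f α β/l^9|) + |t10f α β/l^10| := by
          gcongr ?_ + _ + _; exact abs_add_le _ _
      _ ≤ |t7f α β|/l^7 + |t8f α β|/l^7 + |t9f α β|/l^7 + |t10f α β|/l^7 := by
          have d7 : |t7f α β/l^7| = |t7f α β|/l^7 := by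
            rw [abs_div, abs_of_pos p7]
          have d8 : |t8f α β/l^8| ≤ |t8f α β|/l^7 := by
            rw [abs_div, abs_of_pos (by positivity : (0:ℝ) < l^8)]
            exact div_le_div_of_nonneg_left (abs_nonneg _) p7 k8 |>.trans le_rfl
          have d9 : |t9f α β/l^9| ≤ |t9f α β|/l^7 := by
            rw [abs_div, abs_of_pos (by positivity : (0:ℝ) < l^9)]
            exact div_le_div_of_nonneg_left (abs_nonneg _) p7 k9 |>.trans le_rfl
          have d10 : |t10f α β/l^10| ≤ |t10f α β|/l^7 := by
            rw [abs_div, abs_of_pos (by positivity : (0:ℝ) < l^10)]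
            exact div_le_div_of_nonneg_left (abs_nonneg _) p7 k10 |>.trans le_rfl
          rw [d7]
          exact add_le_add (add_le_add (add_le_add le_rfl d8) d9) d10
      _ = (|t7f α β| + |t8f α β| + |t9f α β| + |t10f α β|)/l^7 := by ring
  calc |(Tf l - Tf (α+l) - Atr α l) - Mfun α β l * (Tf l - Tf (α+β+l) - Atr (α+β) l)
        + (-(α/(α+β)) * (t7f α β/l^7 + t8f α β/l^8 + t9f α β/l^9 + t10f α β/l^10))|
      ≤ |(Tf l - Tf (α+l) - Atr α l) - Mfun α β l * (Tf l - Tf (α+β+l) - Atr (α+β) l)|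
        + |(-(α/(α+β)) * (t7f α β/l^7 + t8f α β/l^8 + t9f α β/l^9 + t10f α β/l^10))| :=
        abs_add_le _ _
    _ ≤ (|Tf l - Tf (α+l) - Atr α l|
          + |Mfun α β l| * |Tf l - Tf (α+β+l) - Atr (α+β) l|)
        + |α/(α+β)| * (|t7f α β| + |t8f α β| + |t9f α β| + |t10f α β|) / l^7 := by
        refine add_le_add ((abs_sub _ _).trans ?_) h3
        rw [abs_mul]
    _ ≤ (CA α / l^7 + CMf α β * (CA (α+β) / l^7))
        + |α/(α+β)| * (|t7f α β| + |t8f α β| + |t9f α β| + |t10f α β|) / l^7 := by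
        have hCM0 : 0 ≤ CMf α β := by
          rw [CMf]
          have h1' : (0:ℝ) ≤ |α/(α+β)| := abs_nonneg _
          positivity
        refine add_le_add (add_le_add h1 ?_) le_rfl
        exact mul_le_mul hM h2 (abs_nonneg _) hCM0
    _ = CGf α β / l^7 := by rw [CGf]; ring

end XiAux


namespace XiAux

lemma CMf_nonneg {α β : ℝ} (hβ : 0 < β) : 0 ≤ CMf α β := by
  rw [CMf]
  apply mul_nonneg (abs_nonneg _)
  have h1 := abs_nonneg (β*(1-2*α))
  have h2 := abs_nonneg (α*β*(α-1))
  have h3 := abs_nonneg (β*(12*α^3-18*α^2+α-β+3))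
  linarith

lemma CA_nonneg {u : ℝ} (hu : 0 ≤ u) : 0 ≤ CA u := by
  rw [CA]
  refine div_nonneg ?_ (by norm_num)
  have h : ∀ k : ℕ, (0:ℝ) ≤ u^k := fun k => pow_nonneg hu k
  repeat' apply add_nonneg
  all_goals exact mul_nonneg (by norm_num) (h _)

lemma CGf_nonneg {α β : ℝ} (hα : 0 < α) (hβ : 0 < β) : 0 ≤ CGf α β := by
  rw [CGf]
  have h1 : 0 ≤ CA α := CA_nonneg hα.le
  have h2 : 0 ≤ CA (α+β) := CA_nonneg (by linarith)
  have h3 : 0 ≤ CMf α β := CMf_nonneg hβ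
  have h4 := abs_nonneg (α/(α+β))
  have h5 := abs_nonneg (t7f α β)
  have h6 := abs_nonneg (t8f α β)
  have h7 := abs_nonneg (t9f α β)
  have h8 := abs_nonneg (t10f α β)
  have h9 : 0 ≤ |α/(α+β)| * (|t7f α β| + |t8f α β| + |t9f α β| + |t10f α β|) := by positivity
  nlinarith [mul_nonneg h3 h2]

end XiAux

open XiAux in
/-- Lemma `lm:exp1`: the asymptotic expansion, as `λ → ∞`, of
`ξ₁(λ) = (ψ₁(λ) − ψ₁(α+λ)) / (ψ₁(λ) − ψ₁(α+β+λ))`, with error `O(λ⁻⁵)`. -/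
theorem xi_one_expansion (α β : ℝ) (hα : 0 < α) (hβ : 0 < β) :
    (fun lam : ℝ =>
        (polygamma 1 lam - polygamma 1 (α + lam)) /
            (polygamma 1 lam - polygamma 1 (α + β + lam)) -
          α / (α + β) *
            (1 + β / lam + β * (1 - 2 * α) / (2 * lam ^ 2)
              + α * β * (α - 1) / lam ^ 3
              - β * (12 * α ^ 3 - 18 * α ^ 2 + α - β + 3) / (12 * lam ^ 4)))
      =O[atTop] fun lam : ℝ => (lam ^ 5)⁻¹ := by
  have hs : 0 < α + β := by linarith
  rw [isBigO_iff]
  refine ⟨8 * (CGf α β + 4 + 4 * CMf α β) / (α + β), ?_⟩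
  filter_upwards [eventually_ge_atTop (2 + (α + β) + 32/(α+β))] with l hl
  have h32 : 0 < 32/(α+β) := by positivity
  have hl2 : 2 ≤ l := by linarith
  have hl1 : 1 ≤ l := by linarith
  have hl0 : 0 < l := by linarith
  have hlges : α + β ≤ l := by linarith
  have hl32 : 32/(α+β) ≤ l := by linarith
  have hl32' : 32 ≤ (α+β) * l := by
    rw [div_le_iff₀ hs] at hl32
    linarith [hl32]
  -- rewrite polygamma as tg and the main term as Mfun
  simp only [polygamma_one_eq_tg]
  rw [show α / (α + β) *
          (1 + β / l + β * (1 - 2 * α) / (2 * l ^ 2) + α * β * (α - 1) / l ^ 3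
            - β * (12 * α ^ 3 - 18 * α ^ 2 + α - β + 3) / (12 * l ^ 4)) = Mfun α β l from rfl]
  set M := Mfun α β l with hM
  set N := tg l - tg (α + l) with hN
  set D := tg l - tg (α + β + l) with hD
  -- error bounds
  have hEl : |Ef l| ≤ 2 * (l^7)⁻¹ := Ef_bound hl2
  have hinvmono : ∀ y : ℝ, l ≤ y → (y^7)⁻¹ ≤ (l^7)⁻¹ := by
    intro y hy
    apply inv_anti₀ (by positivity)
    exact pow_le_pow_left₀ hl0.le hy 7
  have hEa : |Ef (α + l)| ≤ 2 * (l^7)⁻¹ := by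
    refine (Ef_bound (by linarith)).trans ?_
    have := hinvmono (α + l) (by linarith)
    linarith
  have hEs : |Ef (α + β + l)| ≤ 2 * (l^7)⁻¹ := by
    refine (Ef_bound (by linarith)).trans ?_
    have := hinvmono (α + β + l) (by linarith)
    linarith
  -- lower bound for the rational part of the denominator
  have hsl : 0 < α + β + l := by linarith
  have hDrat : (α+β)/(4*l^2) ≤ Tf l - Tf (α+β+l) := by
    have e1 : (α+β)/(2*l^2) ≤ l⁻¹ - (α+β+l)⁻¹ := by
      have key : l⁻¹ - (α+β+l)⁻¹ = (α+β)/(l*(α+β+l)) := by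
        field_simp
        ring
      rw [key]
      apply div_le_div_of_nonneg_left hs.le (by positivity)
      nlinarith
    have e2 : (2*(α+β+l)^2)⁻¹ ≤ (2*l^2)⁻¹ := by
      apply inv_anti₀ (by positivity)
      nlinarith
    have e3 : (6*(α+β+l)^3)⁻¹ ≤ (6*l^3)⁻¹ := by
      apply inv_anti₀ (by positivity)
      have : l^3 ≤ (α+β+l)^3 := pow_le_pow_left₀ hl0.le (by linarith) 3
      linarith
    have e4 : (0:ℝ) < (30*(α+β+l)^5)⁻¹ := by positivity
    have e5 : (30*l^5)⁻¹ ≤ (α+β)/(4*l^2) := by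
      rw [show ((30:ℝ)*l^5)⁻¹ = 1/(30*l^5) by rw [one_div], div_le_div_iff₀ (by positivity)
        (by positivity)]
      have k1 : 32*l^4 ≤ ((α+β)*l)*l^4 := mul_le_mul_of_nonneg_right hl32' (by positivity)
      nlinarith [pow_le_pow_right₀ hl1 (show 2 ≤ 4 by norm_num), pow_pos hl0 2]
    have e6 : (α+β)/(2*l^2) = 2*((α+β)/(4*l^2)) := by ring
    have hTfdiff : Tf l - Tf (α+β+l) = (l⁻¹ - (α+β+l)⁻¹)
        + ((2*l^2)⁻¹ - (2*(α+β+l)^2)⁻¹) + ((6*l^3)⁻¹ - (6*(α+β+l)^3)⁻¹)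
        - ((30*l^5)⁻¹ - (30*(α+β+l)^5)⁻¹) := by
      simp only [Tf]; ring
    rw [hTfdiff]
    linarith
  -- lower bound for the denominator
  have hEl' := abs_le.mp hEl
  have hEs' := abs_le.mp hEs
  have hEa' := abs_le.mp hEa
  have e7 : 4*(l^7)⁻¹ ≤ (α+β)/(8*l^2) := by
    rw [show (4:ℝ)*(l^7)⁻¹ = 4/l^7 by rw [div_eq_mul_inv], div_le_div_iff₀ (by positivity)
      (by positivity)]
    have k1 : 32*l^6 ≤ ((α+β)*l)*l^6 := mul_le_mul_of_nonneg_right hl32' (by positivity)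
    nlinarith [pow_le_pow_right₀ hl1 (show 2 ≤ 6 by norm_num), pow_pos hl0 2]
  have hDdec : D = (Tf l - Tf (α+β+l)) + Ef l - Ef (α+β+l) := by
    rw [hD]; simp only [Ef]; ring
  have hDlow : (α+β)/(8*l^2) ≤ D := by
    rw [hDdec]
    have e8 : (α+β)/(4*l^2) = 2*((α+β)/(8*l^2)) := by ring
    linarith [hDrat, hEl'.1, hEs'.2]
  have hDpos : 0 < D := lt_of_lt_of_le (by positivity) hDlow
  -- numerator bound
  have hG := G_bound (α := α) (β := β) hα hβ hl1
  rw [← hM] at hG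
  have hnum : |N - M*D| ≤ (CGf α β + 4 + 4*CMf α β) * (l^7)⁻¹ := by
    have hdec : N - M*D = ((Tf l - Tf (α+l)) - M*(Tf l - Tf (α+β+l)))
        + (Ef l - Ef (α+l)) - M*(Ef l - Ef (α+β+l)) := by
      rw [hN, hD]; simp only [Ef]; ring
    rw [hdec]
    have hMb : |M| ≤ CMf α β := M_bound hβ hl1
    have hB : |Ef l - Ef (α+l)| ≤ 4*(l^7)⁻¹ := by
      refine (abs_sub _ _).trans ?_
      linarith
    have hC : |Ef l - Ef (α+β+l)| ≤ 4*(l^7)⁻¹ := by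
      refine (abs_sub _ _).trans ?_
      linarith
    calc |((Tf l - Tf (α+l)) - M*(Tf l - Tf (α+β+l))) + (Ef l - Ef (α+l))
          - M*(Ef l - Ef (α+β+l))|
        ≤ |((Tf l - Tf (α+l)) - M*(Tf l - Tf (α+β+l))) + (Ef l - Ef (α+l))|
          + |M*(Ef l - Ef (α+β+l))| := abs_sub _ _
      _ ≤ (|(Tf l - Tf (α+l)) - M*(Tf l - Tf (α+β+l))| + |Ef l - Ef (α+l)|)
          + |M| * |Ef l - Ef (α+β+l)| := by
          refine add_le_add (abs_add_le _ _) ?_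
          rw [abs_mul]
      _ ≤ (CGf α β/l^7 + 4*(l^7)⁻¹) + CMf α β * (4*(l^7)⁻¹) := by
          refine add_le_add (add_le_add hG hB) ?_
          exact mul_le_mul hMb hC (abs_nonneg _) (le_trans (abs_nonneg _) hMb)
      _ = (CGf α β + 4 + 4*CMf α β) * (l^7)⁻¹ := by
          rw [div_eq_mul_inv]; ring
  -- final bound
  have hfrac : N/D - M = (N - M*D)/D := by
    field_simp
  rw [hfrac, Real.norm_eq_abs, Real.norm_eq_abs, abs_div, abs_of_pos hDpos,
    abs_of_pos (by positivity : (0:ℝ) < (l^5)⁻¹)]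
  have hCnum : 0 ≤ (CGf α β + 4 + 4*CMf α β) * (l^7)⁻¹ := by
    have h1 := CGf_nonneg (α := α) (β := β) hα hβ
    have h2 := CMf_nonneg (α := α) (β := β) hβ
    positivity
  calc |N - M*D|/D ≤ ((CGf α β + 4 + 4*CMf α β) * (l^7)⁻¹)/((α+β)/(8*l^2)) :=
        div_le_div₀ hCnum hnum (by positivity) hDlow
    _ = 8 * (CGf α β + 4 + 4 * CMf α β) / (α + β) * (l^5)⁻¹ := by
        field_simp
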